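/- Let 𝔽 be a field, V an 𝔽-vector space, and 𝔙 an expansion of V by predicates for a family of 𝔽-linear subspaces of the various powers V^n. Then every 𝔙-definable subset of V^n is a boolean combination of affine subspaces of V^n (cosets of 𝔽-linear subspaces). If moreover 𝔽 has characteristic zero, then every 𝔙-definable subgroup of any V^n is an 𝔽-linear subspace. -/

import Mathlib

open FirstOrder Language Set Cardinal

namespace TracePaper

/-- First-order languages with symbols in `Type 0`. -/
abbrev Lang := FirstOrder.Language.{0,0}

/-- A set is definable with parameters (i.e. over the full domain). -/
def Dfn (L : Lang) (M : Type) [L.Structure M] {α : Type} (s : Set (α → M)) : Prop :=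
  Set.Definable (Set.univ : Set M) L s

/-- A set is definable without parameters. -/
def Dfn0 (L : Lang) (M : Type) [L.Structure M] {α : Type} (s : Set (α → M)) : Prop :=
  Set.Definable (∅ : Set M) L s

/-- `N` trace defines `M` via the injection `τ : M → N^n`. -/
def TraceVia (L₁ : Lang) (N : Type) [L₁.Structure N]
    (L₂ : Lang) (M : Type) [L₂.Structure M] {n : ℕ} (τ : M → Fin n → N) : Prop :=
  ∀ (m : ℕ) (X : Set (Fin m → M)), Dfn L₂ M X →
    ∃ Y : Set (Fin m × Fin n → N), Dfn L₁ N Y ∧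
      X = {a | (fun p : Fin m × Fin n => τ (a p.1) p.2) ∈ Y}

/-- The structure `N` trace defines the structure `M`. -/
def Traces (L₁ : Lang) (N : Type) [L₁.Structure N]
    (L₂ : Lang) (M : Type) [L₂.Structure M] : Prop :=
  ∃ (n : ℕ) (τ : M → Fin n → N), 0 < n ∧ Function.Injective τ ∧ TraceVia L₁ N L₂ M τ

/-- The collection `E` of functions witnesses local trace definability of `M` in `N`. -/
def LocalWitness (L₁ : Lang) (N : Type) [L₁.Structure N]
    (L₂ : Lang) (M : Type) [L₂.Structure M] (E : Set (M → N)) : Prop :=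
  ∀ (m : ℕ) (X : Set (Fin m → M)), Dfn L₂ M X →
    ∃ (d : ℕ) (τ : Fin d → M → N) (j : Fin d → Fin m) (Y : Set (Fin d → N)),
      (∀ t, τ t ∈ E) ∧ Dfn L₁ N Y ∧
      X = {a | (fun t => τ t (a (j t))) ∈ Y}

/-- The structure `N` locally trace defines the structure `M`. -/
def LocTraces (L₁ : Lang) (N : Type) [L₁.Structure N]
    (L₂ : Lang) (M : Type) [L₂.Structure M] : Prop :=
  ∃ E : Set (M → N), LocalWitness L₁ N L₂ M E

/-- `N` locally trace defines `M` via (at most) `κ` functions. -/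
def LocTracesVia (L₁ : Lang) (N : Type) [L₁.Structure N]
    (L₂ : Lang) (M : Type) [L₂.Structure M] (κ : Cardinal.{0}) : Prop :=
  ∃ E : Set (M → N), #E ≤ κ ∧ LocalWitness L₁ N L₂ M E

/-- The theory `T₁` trace defines the theory `T₂`: some model of `T₂` is trace
definable in some model of `T₁`. -/
def TTraces (L₁ : Lang) (T₁ : L₁.Theory) (L₂ : Lang) (T₂ : L₂.Theory) : Prop :=
  ∃ (N : Type) (S₁ : L₁.Structure N) (M : Type) (S₂ : L₂.Structure M),
    Infinite N ∧ Infinite M ∧ @Theory.Model L₁ N S₁ T₁ ∧ @Theory.Model L₂ M S₂ T₂ ∧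
      @Traces L₁ N S₁ L₂ M S₂

/-- Trace equivalence of theories. -/
def TTraceEquiv (L₁ : Lang) (T₁ : L₁.Theory) (L₂ : Lang) (T₂ : L₂.Theory) :
    Prop :=
  TTraces L₁ T₁ L₂ T₂ ∧ TTraces L₂ T₂ L₁ T₁

/-- The theory `T₁` locally trace defines the theory `T₂`. -/
def TLocTraces (L₁ : Lang) (T₁ : L₁.Theory) (L₂ : Lang) (T₂ : L₂.Theory) :
    Prop :=
  ∃ (N : Type) (S₁ : L₁.Structure N) (M : Type) (S₂ : L₂.Structure M),
    Infinite N ∧ Infinite M ∧ @Theory.Model L₁ N S₁ T₁ ∧ @Theory.Model L₂ M S₂ T₂ ∧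
      @LocTraces L₁ N S₁ L₂ M S₂

/-- The theory `T₁` locally trace defines the theory `T₂` via at most `κ` functions. -/
def TLocTracesVia (L₁ : Lang) (T₁ : L₁.Theory) (L₂ : Lang) (T₂ : L₂.Theory)
    (κ : Cardinal.{0}) : Prop :=
  ∃ (N : Type) (S₁ : L₁.Structure N) (M : Type) (S₂ : L₂.Structure M),
    Infinite N ∧ Infinite M ∧ @Theory.Model L₁ N S₁ T₁ ∧ @Theory.Model L₂ M S₂ T₂ ∧
      @LocTracesVia L₁ N S₁ L₂ M S₂ κ

/-- Local trace equivalence of theories. -/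
def TLocTraceEquiv (L₁ : Lang) (T₁ : L₁.Theory) (L₂ : Lang)
    (T₂ : L₂.Theory) : Prop :=
  TLocTraces L₁ T₁ L₂ T₂ ∧ TLocTraces L₂ T₂ L₁ T₁

/-- A theory is trace maximal if it trace defines every (infinite) structure. -/
def TraceMaximal (L₁ : Lang) (T₁ : L₁.Theory) : Prop :=
  ∀ (L₂ : Lang) (M : Type) (S₂ : L₂.Structure M), Infinite M →
    TTraces L₁ T₁ L₂ (@Language.completeTheory L₂ M S₂)

section DLang

/-- The relational language coding the function symbols of `L`: an `n`-ary function symbol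
becomes an `(n+1)`-ary relation symbol (its graph). -/
def funRelLang (L : Lang) : Lang where
  Functions := fun _ => Empty
  Relations := fun n => match n with
    | 0 => Empty
    | (m+1) => L.Functions m

/-- The language consisting of the relation symbols of `L`. -/
def relLang (L : Lang) : Lang where
  Functions := fun _ => Empty
  Relations := L.Relations

/-- The language with a unary sort predicate (for the first sort `P`) and a binary relation
symbol for (the graph of) each projection `π_i`, `i : ι`. -/
def projLang (ι : Type) : Lang where
  Functions := fun _ => Empty
  Relations := fun n => match n with
    | 1 => Unit
    | 2 => ι
    | _ => Empty

/-- The (relational) one-sorted language coding the two-sorted structures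
`(P, 𝔐, (π_i)_{i : ι})`. -/
def DLang (L : Lang) (ι : Type) : Lang :=
  (funRelLang L).sum ((relLang L).sum (projLang ι))

variable {L : Lang} {ι P M : Type}

/-- Interpretation of the graph-relations of the function symbols of `L` on `P ⊕ M`. -/
def funRelInterp (L : Lang) (P M : Type) [L.Structure M] :
    ∀ {n : ℕ}, (funRelLang L).Relations n → (Fin n → P ⊕ M) → Prop
  | 0, r, _ => Empty.elim r
  | (m+1), g, x =>
      ∃ a : Fin m → M, (∀ i : Fin m, x i.castSucc = Sum.inr (a i)) ∧
        x (Fin.last m) = Sum.inr (Structure.funMap g a)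

/-- Interpretation of the sort predicate and the projection graphs on `P ⊕ M`. -/
def projInterp (π : ι → P → M) :
    ∀ {n : ℕ}, (projLang ι).Relations n → (Fin n → P ⊕ M) → Prop
  | 0, r, _ => Empty.elim r
  | 1, _, x => ∃ p : P, x 0 = Sum.inl p
  | 2, i, x => ∃ p : P, x 0 = Sum.inl p ∧ x 1 = Sum.inr (π i p)
  | (_+3), r, _ => Empty.elim r

/-- The one-sorted structure on `P ⊕ M` coding the two-sorted structure `(P, 𝔐, (π_i))`. -/
def dStructure (L : Lang) (ι P M : Type) [L.Structure M] (π : ι → P → M) :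
    (DLang L ι).Structure (P ⊕ M) where
  funMap := fun {_} f _ => (Sum.elim Empty.elim (Sum.elim Empty.elim Empty.elim)) f
  RelMap := fun {n} r x =>
    Sum.elim (fun g => funRelInterp L P M g x)
      (Sum.elim
        (fun s => ∃ a : Fin n → M, (∀ i, x i = Sum.inr (a i)) ∧
          Structure.RelMap (L := L) (M := M) (show L.Relations n from s) a)
        (fun t => projInterp π t x)) r

/-- The canonical structure coding `(M^ι, 𝔐, (π_i)_{i : ι})`. -/
def canonD (L : Lang) (ι M : Type) [L.Structure M] :
    (DLang L ι).Structure ((ι → M) ⊕ M) :=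
  dStructure L ι (ι → M) M (fun i x => x i)

/-- The theory `D^κ(T)` where `κ = #ι` and `T = Th(M)`: the complete theory of the
(coded) two-sorted structure `(M^ι, 𝔐, (π_i)_{i : ι})`. -/
def DTheory (L : Lang) (ι M : Type) [L.Structure M] : (DLang L ι).Theory :=
  @Language.completeTheory (DLang L ι) ((ι → M) ⊕ M) (canonD L ι M)

/-- The genericity axioms for `(P, 𝔐, (π_i))`: any finite, pairwise-distinctly-indexed
tuple of values is realized by at least `m` elements of `P`, for every `m`. -/
def Generic {ι P M : Type} (π : ι → P → M) : Prop :=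
  ∀ (n : ℕ) (idx : Fin n → ι), Function.Injective idx →
    ∀ (a : Fin n → M) (m : ℕ), ∃ S : Finset P, m ≤ S.card ∧
      ∀ p ∈ S, ∀ k : Fin n, π (idx k) p = a k

end DLang

section Vec

/-- The language of `F`-vector spaces: a constant `0`, a unary function symbol for scalar
multiplication by each element of `F`, and a binary addition. -/
def vecLang (F : Type) : Lang where
  Functions := fun n => match n with
    | 0 => Unit
    | 1 => F
    | 2 => Unit
    | _ => Empty
  Relations := fun _ => Empty

/-- The natural `vecLang F`-structure on an `F`-vector space `V`. -/
def vecStructure (F V : Type) [Field F] [AddCommGroup V] [Module F V] :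
    (vecLang F).Structure V where
  funMap := fun {n} g x => match n, g, x with
    | 0, _, _ => 0
    | 1, c, x => (show F from c) • x 0
    | 2, _, x => x 0 + x 1
    | (_+3), g, _ => Empty.elim g
  RelMap := fun r _ => Empty.elim r

end Vec
/-- Boolean combinations of sets from a family `G`. -/
inductive BoolComb {α : Type} (G : Set (Set α)) : Set α → Prop
  | basic {s : Set α} : s ∈ G → BoolComb G s
  | univ : BoolComb G Set.univ
  | compl {s : Set α} : BoolComb G s → BoolComb G sᶜ
  | inter {s t : Set α} : BoolComb G s → BoolComb G t → BoolComb G (s ∩ t)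

/-- The language with an `n`-ary relation symbol for each member of `ι n`. -/
def famLang (ι : ℕ → Type) : Lang where
  Functions := fun _ => Empty
  Relations := ι

/-- The structure interpreting each relation symbol of `famLang ι` by the corresponding
distinguished subspace of `V^n`. -/
def famStructure {F V : Type} [Field F] [AddCommGroup V] [Module F V]
    (ι : ℕ → Type) (W : ∀ n, ι n → Submodule F (Fin n → V)) : (famLang ι).Structure V where
  funMap := fun g _ => Empty.elim g
  RelMap := fun {n} r x => x ∈ W n r

section AffCore

variable {α : Type} {G : Set (Set α)}

theorem BoolComb.empty : BoolComb G (∅ : Set α) := by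
  simpa using BoolComb.compl (BoolComb.univ)

theorem BoolComb.union {s t : Set α} (hs : BoolComb G s) (ht : BoolComb G t) :
    BoolComb G (s ∪ t) := by
  have := (hs.compl.inter ht.compl).compl
  simpa [Set.compl_inter] using this

theorem BoolComb.iInter {κ : Type} [Finite κ] {f : κ → Set α}
    (h : ∀ i, BoolComb G (f i)) : BoolComb G (⋂ i, f i) := by
  classical
  have := Fintype.ofFinite κ
  have key : ∀ s : Finset κ, BoolComb G (⋂ i ∈ s, f i) := by
    intro s
    induction s using Finset.induction_on with
    | empty => simpa using BoolComb.univ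
    | insert _ _ hx ih =>
      rw [Finset.set_biInter_insert]
      exact (h _).inter ih
  have : (⋂ i, f i) = ⋂ i ∈ Finset.univ, f i := by simp
  rw [this]; exact key _

theorem BoolComb.iUnion {κ : Type} [Finite κ] {f : κ → Set α}
    (h : ∀ i, BoolComb G (f i)) : BoolComb G (⋃ i, f i) := by
  have := BoolComb.iInter (f := fun i => (f i)ᶜ) (fun i => (h i).compl)
  simpa [Set.compl_iInter] using this.compl

theorem BoolComb.biUnion {κ : Type} [Finite κ] {s : Finset κ} {f : κ → Set α}
    (h : ∀ i ∈ s, BoolComb G (f i)) : BoolComb G (⋃ i ∈ s, f i) := by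
  classical
  induction s using Finset.induction_on with
  | empty => simpa using BoolComb.empty
  | insert _ _ hx ih =>
    rw [Finset.set_biUnion_insert]
    exact (h _ (by simp)).union (ih fun i hi => h i (by simp [hi]))

end AffCore

/-- The family of cosets (affine subspaces) of a module. -/
def Aff (F : Type) [Field F] (W : Type) [AddCommGroup W] [Module F W] : Set (Set W) :=
  {S | ∃ (U : Submodule F W) (v : W), S = {x | x - v ∈ U}}

section Aff

variable {F : Type} [Field F] {W W' : Type} [AddCommGroup W] [Module F W]
  [AddCommGroup W'] [Module F W']

theorem Aff.univ_mem : Set.univ ∈ Aff F W :=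
  ⟨⊤, 0, by simp⟩

theorem Aff.nonempty {S : Set W} (h : S ∈ Aff F W) : S.Nonempty := by
  obtain ⟨U, v, rfl⟩ := h
  exact ⟨v, by simp⟩

/-- A nonempty coset can be rebased at any of its points. -/
theorem Aff.rebase {U : Submodule F W} {v w : W} (hw : w - v ∈ U) :
    {x | x - v ∈ U} = {x | x - w ∈ U} := by
  ext x
  constructor <;> intro hx
  · simpa using U.sub_mem hx hw
  · have := U.add_mem hx hw
    simpa [sub_add_sub_cancel] using this

theorem Aff.inter {S T : Set W} (hS : S ∈ Aff F W) (hT : T ∈ Aff F W) :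
    S ∩ T ∈ Aff F W ∨ S ∩ T = ∅ := by
  obtain ⟨U, v, rfl⟩ := hS
  obtain ⟨U', v', rfl⟩ := hT
  rcases Set.eq_empty_or_nonempty ({x | x - v ∈ U} ∩ {x | x - v' ∈ U'}) with h | ⟨w, hw1, hw2⟩
  · exact Or.inr h
  · left
    refine ⟨U ⊓ U', w, ?_⟩
    rw [Aff.rebase (U := U) (v := v) (w := w) hw1,
      Aff.rebase (U := U') (v := v') (w := w) hw2]
    rfl

/-- Preimage of a coset under an affine map is a coset or empty. -/
theorem Aff.preimage_affine (ℓ : W →ₗ[F] W') (c : W') {S : Set W'} (hS : S ∈ Aff F W') :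
    (fun x => ℓ x + c) ⁻¹' S ∈ Aff F W ∨ (fun x => ℓ x + c) ⁻¹' S = ∅ := by
  obtain ⟨U, v, rfl⟩ := hS
  rcases Set.eq_empty_or_nonempty ((fun x => ℓ x + c) ⁻¹' {x | x - v ∈ U}) with h | ⟨x₀, hx₀⟩
  · exact Or.inr h
  · left
    refine ⟨U.comap ℓ, x₀, ?_⟩
    ext x
    simp only [Set.mem_preimage, Set.mem_setOf_eq, Submodule.mem_comap, map_sub]
    have hx₀' : ℓ x₀ + c - v ∈ U := hx₀
    constructor <;> intro hx
    · simpa [add_sub_add_right_eq_sub] using U.sub_mem hx hx₀'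
    · have := U.add_mem hx hx₀'
      have e : ℓ x - ℓ x₀ + (ℓ x₀ + c - v) = ℓ x + c - v := by abel
      rwa [e] at this

theorem BoolComb.preimage_affine (ℓ : W →ₗ[F] W') (c : W') {S : Set W'}
    (hS : BoolComb (Aff F W') S) : BoolComb (Aff F W) ((fun x => ℓ x + c) ⁻¹' S) := by
  induction hS with
  | basic h =>
    rcases Aff.preimage_affine ℓ c h with h' | h'
    · exact BoolComb.basic h'
    · rw [h']; exact BoolComb.empty
  | univ => simpa using BoolComb.univ
  | compl _ ih => rw [Set.preimage_compl]; exact ih.compl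
  | inter _ _ ih1 ih2 => rw [Set.preimage_inter]; exact ih1.inter ih2

theorem BoolComb.preimage_linear (ℓ : W →ₗ[F] W') {S : Set W'}
    (hS : BoolComb (Aff F W') S) : BoolComb (Aff F W) (ℓ ⁻¹' S) := by
  have := BoolComb.preimage_affine ℓ 0 hS
  simpa using this

end Aff


section DNF

variable {α : Type} {G : Set (Set α)}

/-- A cell: a basic set (or ∅) minus finitely many basic-or-empty sets. -/
def IsCell (G : Set (Set α)) (S : Set α) : Prop :=
  ∃ C : Set α, (C ∈ G ∨ C = ∅) ∧ ∃ (μ : Type) (_ : Finite μ) (D : μ → Set α),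
    (∀ i, D i ∈ G ∨ D i = ∅) ∧ S = C ∩ ⋂ i, (D i)ᶜ

/-- A finite union of cells. -/
def IsDNF (G : Set (Set α)) (S : Set α) : Prop :=
  ∃ (κ : Type) (_ : Finite κ) (c : κ → Set α), (∀ i, IsCell G (c i)) ∧ S = ⋃ i, c i

theorem IsCell.boolComb {S : Set α} (h : IsCell G S) : BoolComb G S := by
  obtain ⟨C, hC, μ, _, D, hD, rfl⟩ := h
  have h1 : BoolComb G C := by
    rcases hC with h | rfl
    · exact BoolComb.basic h
    · exact BoolComb.empty
  refine h1.inter (BoolComb.iInter fun i => ?_)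
  rcases hD i with h | h
  · exact (BoolComb.basic h).compl
  · rw [h]; simpa using (BoolComb.empty (G := G)).compl

theorem IsDNF.boolComb {S : Set α} (h : IsDNF G S) : BoolComb G S := by
  obtain ⟨κ, _, c, hc, rfl⟩ := h
  exact BoolComb.iUnion fun i => (hc i).boolComb

theorem IsCell.of_mem {S : Set α} (h : S ∈ G ∨ S = ∅) : IsCell G S :=
  ⟨S, h, Empty, inferInstance, Empty.elim, fun i => i.elim, by simp⟩

theorem IsDNF.of_cell {S : Set α} (h : IsCell G S) : IsDNF G S :=
  ⟨Unit, inferInstance, fun _ => S, fun _ => h, by rw [Set.iUnion_const]⟩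

variable (hG : ∀ S T : Set α, S ∈ G → T ∈ G → (S ∩ T ∈ G ∨ S ∩ T = ∅))

include hG in
theorem IsCell.inter {S T : Set α} (hS : IsCell G S) (hT : IsCell G T) :
    IsCell G (S ∩ T) := by
  obtain ⟨C, hC, μ, _, D, hD, rfl⟩ := hS
  obtain ⟨C', hC', μ', _, D', hD', rfl⟩ := hT
  refine ⟨C ∩ C', ?_, μ ⊕ μ', inferInstance, Sum.elim D D', ?_, ?_⟩
  · rcases hC with h | rfl
    · rcases hC' with h' | rfl
      · exact hG _ _ h h'
      · right; simp
    · right; simp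
  · rintro (i | i)
    · exact hD i
    · exact hD' i
  · rw [Set.iInter_sum]
    ext x
    simp only [Set.mem_inter_iff, Set.mem_iInter, Sum.elim_inl, Sum.elim_inr]
    tauto

include hG in
theorem IsDNF.inter {S T : Set α} (hS : IsDNF G S) (hT : IsDNF G T) :
    IsDNF G (S ∩ T) := by
  obtain ⟨κ, _, c, hc, rfl⟩ := hS
  obtain ⟨κ', _, c', hc', rfl⟩ := hT
  refine ⟨κ × κ', inferInstance, fun p => c p.1 ∩ c' p.2,
    fun p => (hc p.1).inter hG (hc' p.2), ?_⟩
  ext x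
  simp only [Set.mem_inter_iff, Set.mem_iUnion]
  constructor
  · rintro ⟨⟨i, hi⟩, ⟨j, hj⟩⟩; exact ⟨⟨i, j⟩, hi, hj⟩
  · rintro ⟨⟨i, j⟩, hi, hj⟩; exact ⟨⟨i, hi⟩, ⟨j, hj⟩⟩

theorem IsDNF.union {S T : Set α} (hS : IsDNF G S) (hT : IsDNF G T) :
    IsDNF G (S ∪ T) := by
  obtain ⟨κ, _, c, hc, rfl⟩ := hS
  obtain ⟨κ', _, c', hc', rfl⟩ := hT
  refine ⟨κ ⊕ κ', inferInstance, Sum.elim c c', ?_, ?_⟩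
  · rintro (i | i); exacts [hc i, hc' i]
  · rw [Set.iUnion_sum]; simp

include hG in
theorem IsDNF.iInter {κ : Type} [Finite κ] (huniv : Set.univ ∈ G) {f : κ → Set α}
    (h : ∀ i, IsDNF G (f i)) : IsDNF G (⋂ i, f i) := by
  classical
  have := Fintype.ofFinite κ
  have key : ∀ s : Finset κ, IsDNF G (⋂ i ∈ s, f i) := by
    intro s
    induction s using Finset.induction_on with
    | empty =>
      simpa using IsDNF.of_cell (IsCell.of_mem (Or.inl huniv))
    | insert _ _ hx ih =>
      rw [Finset.set_biInter_insert]
      exact (h _).inter hG ih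
  have e : (⋂ i, f i) = ⋂ i ∈ Finset.univ, f i := by simp
  rw [e]; exact key _

include hG in
theorem IsCell.compl_dnf {S : Set α} (huniv : Set.univ ∈ G) (h : IsCell G S) :
    IsDNF G Sᶜ := by
  obtain ⟨C, hC, μ, _, D, hD, rfl⟩ := h
  have : (C ∩ ⋂ i, (D i)ᶜ)ᶜ = Cᶜ ∪ ⋃ i, D i := by
    simp [Set.compl_inter, Set.compl_iInter]
  rw [this]
  have h1 : IsDNF G Cᶜ := by
    refine IsDNF.of_cell ⟨Set.univ, Or.inl huniv, Unit, inferInstance, fun _ => C,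
      fun _ => hC, by rw [Set.iInter_const]; simp⟩
  have h2 : ∀ i, IsDNF G (D i) := fun i => IsDNF.of_cell (IsCell.of_mem (hD i))
  have h3 : IsDNF G (⋃ i, D i) := by
    classical
    have := Fintype.ofFinite μ
    have key : ∀ s : Finset μ, IsDNF G (⋃ i ∈ s, D i) := by
      intro s
      induction s using Finset.induction_on with
      | empty => simpa using IsDNF.of_cell (IsCell.of_mem (Or.inr rfl))
      | insert _ _ hx ih =>
        rw [Finset.set_biUnion_insert]
        exact (h2 _).union ih
    have e : (⋃ i, D i) = ⋃ i ∈ Finset.univ, D i := by simp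
    rw [e]; exact key _
  exact h1.union h3

include hG in
theorem IsDNF.compl {S : Set α} (huniv : Set.univ ∈ G) (h : IsDNF G S) :
    IsDNF G Sᶜ := by
  obtain ⟨κ, _, c, hc, rfl⟩ := h
  rw [Set.compl_iUnion]
  exact IsDNF.iInter hG huniv fun i => (hc i).compl_dnf hG huniv

include hG in
theorem BoolComb.isDNF {S : Set α} (huniv : Set.univ ∈ G) (h : BoolComb G S) :
    IsDNF G S := by
  induction h with
  | basic h => exact IsDNF.of_cell (IsCell.of_mem (Or.inl h))
  | univ => exact IsDNF.of_cell (IsCell.of_mem (Or.inl huniv))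
  | compl _ ih => exact ih.compl hG huniv
  | inter _ _ ih1 ih2 => exact ih1.inter hG ih2

end DNF

open Pointwise

section Heart

variable {F : Type} [Field F] {W W' : Type} [AddCommGroup W] [Module F W]
  [AddCommGroup W'] [Module F W']

theorem IsCell.image_boolComb (p : W →ₗ[F] W') {S : Set W} (h : IsCell (Aff F W) S) :
    BoolComb (Aff F W') (p '' S) := by
  classical
  obtain ⟨C, hC, μ0, hfin0, D0, hD0, rfl⟩ := h
  rcases hC with hC | rfl
  swap
  · rw [Set.empty_inter, Set.image_empty]; exact BoolComb.empty
  obtain ⟨U, v, rfl⟩ := hC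
  -- drop the empty D's
  set μ : Type := {i : μ0 // D0 i ∈ Aff F W} with hμdef
  haveI : Finite μ := Subtype.finite
  haveI := Fintype.ofFinite μ
  have hSeq : {x | x - v ∈ U} ∩ (⋂ i, (D0 i)ᶜ)
      = {x | x - v ∈ U} ∩ ⋂ i : μ, (D0 i.1)ᶜ := by
    ext x
    simp only [Set.mem_inter_iff, Set.mem_iInter, and_congr_right_iff]
    intro _
    constructor
    · intro h i; exact h i.1
    · intro h i
      rcases hD0 i with hi | hi
      · exact h ⟨i, hi⟩
      · simp [hi]
  rw [hSeq]
  -- coset data for the D's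
  choose Uu vv hDrep using fun i : μ => i.2
  -- the image of the big coset
  set U' : Submodule F W' := U.map p with hU'def
  -- a linear "affine section" ℓσ of p over U'
  obtain ⟨Uc, hUc⟩ := Submodule.exists_isCompl U'
  set π : W' →ₗ[F] U' := U'.linearProjOfIsCompl Uc hUc with hπdef
  have hqsurj : Function.Surjective
      ((p.domRestrict U).codRestrict U' (fun u => Submodule.mem_map_of_mem u.2)) := by
    rintro ⟨y, hy⟩
    obtain ⟨x, hx, rfl⟩ := hy
    exact ⟨⟨x, hx⟩, rfl⟩
  obtain ⟨sec, hsec⟩ := LinearMap.exists_rightInverse_of_surjective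
    ((p.domRestrict U).codRestrict U' (fun u => Submodule.mem_map_of_mem u.2))
    (LinearMap.range_eq_top.2 hqsurj)
  set ℓσ : W' →ₗ[F] W := U.subtype ∘ₗ sec ∘ₗ π with hℓσdef
  have hℓσ : ∀ y ∈ U', ℓσ y ∈ U ∧ p (ℓσ y) = y := by
    intro y hy
    have h1 : π y = ⟨y, hy⟩ := Submodule.linearProjOfIsCompl_apply_left hUc ⟨y, hy⟩
    constructor
    · exact (sec (π y)).2
    · have h2 : ((p.domRestrict U).codRestrict U' (fun u => Submodule.mem_map_of_mem u.2))
          (sec (π y)) = π y := by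
        rw [← LinearMap.comp_apply, hsec, LinearMap.id_apply]
      have h3 : p ((sec (π y)) : W) = ((π y : U') : W') := congrArg Subtype.val h2
      simpa [hℓσdef, h1] using h3
  set σ : W' → W := fun x => ℓσ x + (v - ℓσ (p v)) with hσdef
  have hσC : ∀ y, y - p v ∈ U' → σ y - v ∈ U ∧ p (σ y) = y := by
    intro y hy
    have h1 : σ y - v = ℓσ (y - p v) := by
      simp only [hσdef, map_sub]; abel
    constructor
    · rw [h1]; exact (hℓσ _ hy).1
    · have h2 : p (σ y) = p (ℓσ (y - p v)) + p v := by
        rw [← map_add, ← h1]; congr 1; abel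
      rw [h2, (hℓσ _ hy).2]; abel
  -- the fiber direction
  set U0 : Submodule F W := U ⊓ LinearMap.ker p with hU0def
  set Hgp : μ → AddSubgroup U0 :=
    fun i => (Uu i).toAddSubgroup.comap U0.subtype.toAddMonoidHom with hHdef
  have hHmem : ∀ (i : μ) (u : U0), u ∈ Hgp i ↔ (u : W) ∈ Uu i := fun i u => Iff.rfl
  set If : Finset μ := Finset.univ.filter (fun i => (Hgp i).FiniteIndex) with hIfdef
  set N : AddSubgroup U0 := ⨅ i ∈ If, Hgp i with hNdef
  have hNfi : N.FiniteIndex := by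
    refine AddSubgroup.finiteIndex_iInf' _ (fun i hi => ?_)
    exact (Finset.mem_filter.mp hi).2
  haveI := hNfi
  haveI : Finite (U0 ⧸ N) := AddSubgroup.finite_quotient_of_finiteIndex
  have hNle : ∀ i ∈ If, N ≤ Hgp i := fun i hi => iInf₂_le i hi
  set rep : U0 ⧸ N → U0 := Quotient.out with hrepdef
  have hrep : ∀ u : U0, u - rep (QuotientAddGroup.mk u) ∈ N := by
    intro u
    have h1 : QuotientAddGroup.mk (s := N) (rep (QuotientAddGroup.mk u))
        = QuotientAddGroup.mk u := QuotientAddGroup.out_eq' _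
    have h2 := (QuotientAddGroup.eq (s := N)).1 h1
    rwa [neg_add_eq_sub] at h2
  -- the exceptional sets
  set E : (U0 ⧸ N) → μ → Set W' :=
    fun r i => (fun x => σ x + ((rep r : U0) : W)) ⁻¹' (D0 i.1) with hEdef
  have hEbc : ∀ r i, BoolComb (Aff F W') (E r i) := by
    intro r i
    have hfun : (fun x => σ x + ((rep r : U0) : W))
        = (fun x => ℓσ x + (v - ℓσ (p v) + ((rep r : U0) : W))) := by
      funext x; simp only [hσdef]; abel
    have h1 : E r i = (fun x => ℓσ x + (v - ℓσ (p v) + ((rep r : U0) : W))) ⁻¹' (D0 i.1) := by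
      simp only [hEdef]
      rw [hfun]
    rw [h1]
    exact BoolComb.preimage_affine _ _ (BoolComb.basic i.2)
  -- the main identity
  have key : p '' ({x | x - v ∈ U} ∩ ⋂ i : μ, (D0 i.1)ᶜ)
      = {y | y - p v ∈ U'} ∩ (⋂ r, ⋃ i ∈ If, E r i)ᶜ := by
    ext y
    constructor
    · rintro ⟨w, ⟨hwC, hwD⟩, rfl⟩
      rw [Set.mem_iInter] at hwD
      have hy1 : p w - p v ∈ U' := by
        rw [← map_sub]; exact Submodule.mem_map_of_mem hwC
      refine ⟨hy1, fun hy2 => ?_⟩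
      rw [Set.mem_iInter] at hy2
      have hw0 : w - σ (p w) ∈ U0 := by
        have he : w - σ (p w) = (w - v) - (σ (p w) - v) := by abel
        refine ⟨by rw [he]; exact U.sub_mem hwC (hσC _ hy1).1, ?_⟩
        show p (w - σ (p w)) = 0
        rw [map_sub, (hσC _ hy1).2, sub_self]
      set u : U0 := ⟨w - σ (p w), hw0⟩ with hudef
      have h4 := hy2 (QuotientAddGroup.mk u)
      rw [Set.mem_iUnion₂] at h4
      obtain ⟨i, hiIf, hiE⟩ := h4
      -- w ∈ D0 i, contradiction
      apply hwD i
      rw [hEdef] at hiE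
      have hiE' : σ (p w) + ((rep (QuotientAddGroup.mk u) : U0) : W) ∈ D0 i.1 := hiE
      rw [hDrep i] at hiE'
      rw [hDrep i]
      have hdiff : ((u - rep (QuotientAddGroup.mk u) : U0) : W) ∈ Uu i :=
        (hHmem i _).1 (hNle i hiIf (hrep u))
      have : w - vv i = (σ (p w) + ((rep (QuotientAddGroup.mk u) : U0) : W) - vv i)
          + ((u - rep (QuotientAddGroup.mk u) : U0) : W) := by
        simp only [hudef, AddSubgroup.coe_sub, Submodule.coe_sub]
        push_cast
        abel
      show w - vv i ∈ Uu i
      rw [this]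
      exact (Uu i).add_mem hiE' hdiff
    · rintro ⟨hy1, hy2⟩
      rw [Set.mem_compl_iff, Set.mem_iInter, not_forall] at hy2
      obtain ⟨r, hr⟩ := hy2
      simp only [Set.mem_iUnion, not_exists] at hr
      by_contra hcon
      -- every element of the fiber lies in some D0 i
      have hfib : ∀ u : U0, ∃ i : μ, σ y + (u : W) ∈ D0 i.1 := by
        intro u
        by_contra hno
        push_neg at hno
        have hm1 : σ y + (u : W) ∈ {x | x - v ∈ U} := by
          show σ y + (u : W) - v ∈ U
          have h1 := (hσC y hy1).1
          have h2 : σ y + (u : W) - v = (σ y - v) + (u : W) := by abel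
          rw [h2]
          exact U.add_mem h1 u.2.1
        have hm2 : σ y + (u : W) ∈ ⋂ i : μ, (D0 i.1)ᶜ := by
          rw [Set.mem_iInter]; exact fun i => hno i
        have h3 : p (σ y + (u : W)) = y := by
          have hker : p (u : W) = 0 := u.2.2
          rw [map_add, hker, add_zero, (hσC y hy1).2]
        exact hcon ⟨σ y + (u : W), ⟨hm1, hm2⟩, h3⟩
      -- coset covering of U0
      set K : μ → Set U0 := fun i => {u : U0 | σ y + (u : W) ∈ D0 i.1} with hKdef
      set sK : Finset μ := Finset.univ.filter (fun i => (K i).Nonempty) with hsKdef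
      set g : μ → U0 := fun i => if h : (K i).Nonempty then h.choose else 0 with hgdef
      have hKcoset : ∀ i, (K i).Nonempty → K i = (g i) +ᵥ ((Hgp i : Set U0)) := by
        intro i hne
        have hgK : g i ∈ K i := by
          rw [hgdef]; simp only [dif_pos hne]; exact hne.choose_spec
        ext u
        have hgK2 : σ y + ((g i : U0) : W) ∈ D0 i.1 := hgK
        rw [hDrep i] at hgK2
        have hgK' : σ y + ((g i : U0) : W) - vv i ∈ Uu i := hgK2
        constructor
        · intro hu
          have hu0 : σ y + (u : W) ∈ D0 i.1 := hu
          rw [hDrep i] at hu0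
          have hu' : σ y + (u : W) - vv i ∈ Uu i := hu0
          have hd : ((u - g i : U0) : W) ∈ Uu i := by
            have := (Uu i).sub_mem hu' hgK'
            simpa [sub_sub_sub_cancel_right, add_sub_add_left_eq_sub] using this
          rw [Set.mem_vadd_set_iff_neg_vadd_mem]
          show -g i + u ∈ Hgp i
          rw [neg_add_eq_sub]
          exact (hHmem i _).2 hd
        · intro hu
          rw [Set.mem_vadd_set_iff_neg_vadd_mem] at hu
          have hd : ((u - g i : U0) : W) ∈ Uu i := by
            have : -g i + u ∈ Hgp i := hu
            rw [neg_add_eq_sub] at this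
            exact (hHmem i _).1 this
          show σ y + (u : W) ∈ D0 i.1
          rw [hDrep i]
          show σ y + (u : W) - vv i ∈ Uu i
          have he : σ y + (u : W) - vv i
              = (σ y + ((g i : U0) : W) - vv i) + ((u - g i : U0) : W) := by
            push_cast
            abel
          rw [he]
          exact (Uu i).add_mem hgK' hd
      have hcovers : ⋃ i ∈ sK, (g i) +ᵥ ((Hgp i : Set U0)) = Set.univ := by
        rw [Set.eq_univ_iff_forall]
        intro u
        obtain ⟨i, hi⟩ := hfib u
        have hne : (K i).Nonempty := ⟨u, hi⟩
        rw [Set.mem_iUnion₂]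
        refine ⟨i, by simp [hsKdef, hne], ?_⟩
        rw [← hKcoset i hne]
        exact hi
      have hfiltered := AddSubgroup.leftCoset_cover_filter_FiniteIndex hcovers
      have hmem : (rep r : U0) ∈ ⋃ i ∈ sK.filter (fun i => (Hgp i).FiniteIndex),
          (g i) +ᵥ ((Hgp i : Set U0)) := by
        rw [hfiltered]; trivial
      rw [Set.mem_iUnion₂] at hmem
      obtain ⟨i, hi, hmem⟩ := hmem
      rw [Finset.mem_filter] at hi
      obtain ⟨hisK, hifi⟩ := hi
      have hiIf : i ∈ If := by rw [hIfdef]; simp [hifi]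
      have hne : (K i).Nonempty := (Finset.mem_filter.mp hisK).2
      have : (rep r : U0) ∈ K i := by rw [hKcoset i hne]; exact hmem
      exact hr i hiIf this
  rw [key]
  have hbase : {y : W' | y - p v ∈ U'} ∈ Aff F W' := ⟨U', p v, rfl⟩
  refine (BoolComb.basic hbase).inter (BoolComb.compl ?_)
  exact BoolComb.iInter fun r => BoolComb.biUnion fun i _ => hEbc r i

end Heart


theorem BoolComb.image_linear {F : Type} [Field F] {W W' : Type} [AddCommGroup W] [Module F W]
    [AddCommGroup W'] [Module F W'] (p : W →ₗ[F] W') {S : Set W}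
    (h : BoolComb (Aff F W) S) : BoolComb (Aff F W') (p '' S) := by
  obtain ⟨κ, _, c, hc, rfl⟩ :=
    h.isDNF (fun S T hS hT => Aff.inter hS hT) Aff.univ_mem
  rw [Set.image_iUnion]
  exact BoolComb.iUnion fun i => (hc i).image_boolComb p

section MT

variable {F V : Type} [Field F] [AddCommGroup V] [Module F V]
  (ι : ℕ → Type) (W : ∀ n, ι n → Submodule F (Fin n → V))

/-- Realizations of terms of the vector-space language are linear. -/
theorem term_linear {γ : Type}
    (t : @Language.Term ((vecLang F).sum (famLang ι)) γ) :
    ∃ ℓ : ((γ → V) →ₗ[F] V), ∀ p : γ → V,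
      @Term.realize ((vecLang F).sum (famLang ι)) V
        (@Language.sumStructure (vecLang F) (famLang ι) V
          (vecStructure F V) (famStructure ι W)) γ p t = ℓ p := by
  letI S : ((vecLang F).sum (famLang ι)).Structure V :=
    @Language.sumStructure (vecLang F) (famLang ι) V (vecStructure F V) (famStructure ι W)
  induction t with
  | var i => exact ⟨LinearMap.proj i, fun p => rfl⟩
  | @func l f ts ih =>
    rcases f with f | f
    · match l, f, ts, ih with
      | 0, f, ts, ih =>
        exact ⟨0, fun p => rfl⟩
      | 1, c, ts, ih =>
        obtain ⟨ℓ, hℓ⟩ := ih 0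
        refine ⟨(show F from c) • ℓ, fun p => ?_⟩
        show (show F from c) • (ts 0).realize p = ((show F from c) • ℓ) p
        rw [hℓ p]
        rfl
      | 2, f, ts, ih =>
        obtain ⟨ℓ₀, h₀⟩ := ih 0
        obtain ⟨ℓ₁, h₁⟩ := ih 1
        refine ⟨ℓ₀ + ℓ₁, fun p => ?_⟩
        show (ts 0).realize p + (ts 1).realize p = (ℓ₀ + ℓ₁) p
        rw [h₀ p, h₁ p]
        rfl
      | (n+3), f, ts, ih => exact f.elim
    · exact f.elim

/-- The key induction: every formula defines a boolean combination of cosets. -/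
theorem bforumla_boolComb {β : Type} {k : ℕ}
    (φ : @Language.BoundedFormula ((vecLang F).sum (famLang ι)) β k) :
    BoolComb (Aff F ((β ⊕ Fin k) → V))
      {p : (β ⊕ Fin k) → V |
        @BoundedFormula.Realize ((vecLang F).sum (famLang ι)) V
          (@Language.sumStructure (vecLang F) (famLang ι) V
            (vecStructure F V) (famStructure ι W)) β k φ (p ∘ Sum.inl) (p ∘ Sum.inr)} := by
  letI S : ((vecLang F).sum (famLang ι)).Structure V :=
    @Language.sumStructure (vecLang F) (famLang ι) V (vecStructure F V) (famStructure ι W)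
  induction φ with
  | @falsum n =>
    have hfal : {p : (β ⊕ Fin n) → V | BoundedFormula.Realize
        (BoundedFormula.falsum : ((vecLang F).sum (famLang ι)).BoundedFormula β n)
        (p ∘ Sum.inl) (p ∘ Sum.inr)} = ∅ := by
      ext p
      simp only [Set.mem_setOf_eq, Set.mem_empty_iff_false, iff_false]
      exact fun h => h
    rw [hfal]; exact BoolComb.empty
  | @equal n t₁ t₂ =>
    obtain ⟨ℓ₁, h₁⟩ := term_linear ι W (γ := β ⊕ Fin n) t₁
    obtain ⟨ℓ₂, h₂⟩ := term_linear ι W (γ := β ⊕ Fin n) t₂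
    have hset : {p : (β ⊕ Fin n) → V | BoundedFormula.Realize
        (BoundedFormula.equal t₁ t₂) (p ∘ Sum.inl) (p ∘ Sum.inr)}
        = (fun p => (ℓ₁ - ℓ₂) p + 0) ⁻¹' {y : V | y - 0 ∈ (⊥ : Submodule F V)} := by
      ext p
      have he : Sum.elim (p ∘ Sum.inl) (p ∘ Sum.inr) = p := Sum.elim_comp_inl_inr p
      have hreal : (BoundedFormula.equal t₁ t₂).Realize (p ∘ Sum.inl) (p ∘ Sum.inr) ↔
          Term.realize (Sum.elim (p ∘ Sum.inl) (p ∘ Sum.inr)) t₁ =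
          Term.realize (Sum.elim (p ∘ Sum.inl) (p ∘ Sum.inr)) t₂ := Iff.rfl
      rw [Set.mem_setOf_eq, hreal, he, h₁ p, h₂ p, Set.mem_preimage]
      simp [sub_eq_zero]
    rw [hset]
    exact BoolComb.preimage_affine _ _ (BoolComb.basic ⟨⊥, 0, rfl⟩)
  | @rel n l R ts =>
    rcases R with R | R
    · exact R.elim
    · have hl := fun i => term_linear ι W (γ := β ⊕ Fin n) (ts i)
      choose ℓ hℓ using hl
      have hset : {p : (β ⊕ Fin n) → V | BoundedFormula.Realize
          (BoundedFormula.rel (Sum.inr R) ts) (p ∘ Sum.inl) (p ∘ Sum.inr)}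
          = (fun p => (LinearMap.pi ℓ) p + 0) ⁻¹'
            {y : Fin l → V | y - 0 ∈ W l R} := by
        ext p
        have he : Sum.elim (p ∘ Sum.inl) (p ∘ Sum.inr) = p := Sum.elim_comp_inl_inr p
        have hreal : (BoundedFormula.rel (Sum.inr R) ts).Realize (p ∘ Sum.inl) (p ∘ Sum.inr) ↔
            (fun i => Term.realize (Sum.elim (p ∘ Sum.inl) (p ∘ Sum.inr)) (ts i)) ∈ W l R :=
          Iff.rfl
        rw [Set.mem_setOf_eq, hreal, he, Set.mem_preimage]
        have heq : (fun i => Term.realize p (ts i)) = fun i => ℓ i p := by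
          funext i; exact hℓ i p
        rw [heq]
        have : (LinearMap.pi ℓ) p + 0 ∈ {y : Fin l → V | y - 0 ∈ W l R}
            ↔ (fun i => (ℓ i) p) ∈ W l R := by
          simp only [Set.mem_setOf_eq, add_zero, sub_zero]
          exact Iff.rfl
        rw [this]
      rw [hset]
      exact BoolComb.preimage_affine _ _ (BoolComb.basic ⟨W l R, 0, rfl⟩)
  | @imp n φ ψ ihφ ihψ =>
    have hset : {p : (β ⊕ Fin n) → V | BoundedFormula.Realize
        (φ.imp ψ) (p ∘ Sum.inl) (p ∘ Sum.inr)}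
        = ({p | BoundedFormula.Realize φ (p ∘ Sum.inl) (p ∘ Sum.inr)} ∩
           {p | BoundedFormula.Realize ψ (p ∘ Sum.inl) (p ∘ Sum.inr)}ᶜ)ᶜ := by
      ext p
      simp only [Set.mem_setOf_eq, Set.mem_compl_iff, Set.mem_inter_iff,
        BoundedFormula.realize_imp]
      tauto
    rw [hset]
    exact (ihφ.inter ihψ.compl).compl
  | @all n φ ih =>
    -- the reindexing linear map
    set coords : (β ⊕ Fin (n + 1)) → ((((β ⊕ Fin n) → V) × V) →ₗ[F] V) :=
      fun j => Sum.rec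
        (fun b => (LinearMap.proj (Sum.inl b)).comp (LinearMap.fst F _ V))
        (fun j => Fin.lastCases (LinearMap.snd F _ V)
          (fun jj => (LinearMap.proj (Sum.inr jj)).comp (LinearMap.fst F _ V)) j) j
      with hcoords
    set ρ : (((β ⊕ Fin n) → V) × V) →ₗ[F] ((β ⊕ Fin (n + 1)) → V) :=
      LinearMap.pi coords with hρ
    have hρ₁ : ∀ (p : (β ⊕ Fin n) → V) (a : V),
        (ρ (p, a)) ∘ Sum.inl = p ∘ Sum.inl := by
      intro p a; funext b; rfl
    have hρ₂ : ∀ (p : (β ⊕ Fin n) → V) (a : V),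
        (ρ (p, a)) ∘ Sum.inr = Fin.snoc (p ∘ Sum.inr) a := by
      intro p a; funext j
      refine Fin.lastCases ?_ (fun jj => ?_) j
      · show coords (Sum.inr (Fin.last n)) (p, a) = _
        rw [Fin.snoc_last]
        simp [hcoords]
      · show coords (Sum.inr jj.castSucc) (p, a) = _
        rw [Fin.snoc_castSucc]
        simp [hcoords]
    set T : Set ((β ⊕ Fin (n + 1)) → V) :=
      {p | BoundedFormula.Realize φ (p ∘ Sum.inl) (p ∘ Sum.inr)} with hT
    have hset : {p : (β ⊕ Fin n) → V | BoundedFormula.Realize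
        φ.all (p ∘ Sum.inl) (p ∘ Sum.inr)}
        = ((LinearMap.fst F ((β ⊕ Fin n) → V) V) '' ((ρ ⁻¹' T)ᶜ))ᶜ := by
      ext p
      rw [Set.mem_compl_iff, Set.mem_setOf_eq, BoundedFormula.realize_all]
      constructor
      · intro h hmem
        obtain ⟨⟨p', a⟩, hp', rfl⟩ := hmem
        apply hp'
        show ρ (p', a) ∈ T
        rw [hT, Set.mem_setOf_eq, hρ₁, hρ₂]
        exact h a
      · intro h a
        by_contra hna
        apply h
        refine ⟨(p, a), ?_, rfl⟩
        intro hmem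
        apply hna
        have hthis : ρ (p, a) ∈ T := hmem
        rw [hT, Set.mem_setOf_eq, hρ₁, hρ₂] at hthis
        exact hthis
    rw [hset]
    exact (BoolComb.image_linear _ ((ih.preimage_linear ρ).compl)).compl

end MT

/-- Let `F` be a field, `V` an `F`-vector space, and `𝔙` the expansion of
`V` by predicates for a family of subspaces `W n r ≤ V^n`.  Then every `𝔙`-definable
subset of `V^n` is a boolean combination of affine subspaces (cosets of subspaces) of
`V^n`.  If moreover `F` has characteristic zero, every `𝔙`-definable subgroup of any
`V^n` is a subspace. -/
theorem statement18 (F V : Type) [Field F] [AddCommGroup V] [Module F V]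
    (ι : ℕ → Type) (W : ∀ n, ι n → Submodule F (Fin n → V)) :
    (∀ (n : ℕ) (X : Set (Fin n → V)),
      @Dfn ((vecLang F).sum (famLang ι)) V
        (@Language.sumStructure (vecLang F) (famLang ι) V
          (vecStructure F V) (famStructure ι W)) _ X →
      BoolComb {S : Set (Fin n → V) |
        ∃ (U : Submodule F (Fin n → V)) (v : Fin n → V), S = {x | x - v ∈ U}} X) ∧
    (CharZero F →
      ∀ (n : ℕ) (H : AddSubgroup (Fin n → V)),
        @Dfn ((vecLang F).sum (famLang ι)) V
          (@Language.sumStructure (vecLang F) (famLang ι) V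
            (vecStructure F V) (famStructure ι W)) _ (H : Set (Fin n → V)) →
        ∃ U : Submodule F (Fin n → V), (H : Set (Fin n → V)) = ↑U) := by

  letI S : ((vecLang F).sum (famLang ι)).Structure V :=
    @Language.sumStructure (vecLang F) (famLang ι) V (vecStructure F V) (famStructure ι W)
  have part1 : ∀ (n : ℕ) (X : Set (Fin n → V)),
      @Dfn ((vecLang F).sum (famLang ι)) V S _ X →
      BoolComb (Aff F (Fin n → V)) X := by
    intro n X hX
    have hX' : Set.Definable (Set.univ : Set V) ((vecLang F).sum (famLang ι)) X := hX
    rw [Set.definable_iff_exists_formula_sum] at hX'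
    obtain ⟨φ, rfl⟩ := hX'
    have hmain := bforumla_boolComb ι W (β := ↥(Set.univ : Set V) ⊕ Fin n) (k := 0) φ
    have β : Unit := ()
    set T : Set (((↥(Set.univ : Set V) ⊕ Fin n) ⊕ Fin 0) → V) :=
      {p | BoundedFormula.Realize φ (p ∘ Sum.inl) (p ∘ Sum.inr)} with hT
    set coords : ((↥(Set.univ : Set V) ⊕ Fin n) ⊕ Fin 0) → ((Fin n → V) →ₗ[F] V) := fun j =>
      Sum.rec (fun b => Sum.rec (fun _ => 0) (fun i => LinearMap.proj i) b)
        (fun j0 => j0.elim0) j with hcoords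
    set ℓg : (Fin n → V) →ₗ[F] (((↥(Set.univ : Set V) ⊕ Fin n) ⊕ Fin 0) → V) := LinearMap.pi coords with hℓg
    set cg : ((↥(Set.univ : Set V) ⊕ Fin n) ⊕ Fin 0) → V := fun j =>
      Sum.rec (fun b => Sum.rec (fun a => (a : V)) (fun _ => 0) b) (fun _ => 0) j with hcg
    have hXeq : {v : Fin n → V | Formula.Realize φ (Sum.elim (↑) v)}
        = (fun x => ℓg x + cg) ⁻¹' T := by
      ext x
      have h1 : (ℓg x + cg) ∘ Sum.inl = Sum.elim (↑) x := by
        funext b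
        rcases b with a | i
        · show ℓg x (Sum.inl (Sum.inl a)) + cg (Sum.inl (Sum.inl a)) = (a : V)
          simp [hℓg, hcoords, hcg, LinearMap.pi_apply]
        · show ℓg x (Sum.inl (Sum.inr i)) + cg (Sum.inl (Sum.inr i)) = x i
          simp [hℓg, hcoords, hcg, LinearMap.pi_apply]
      have h2 : (ℓg x + cg) ∘ Sum.inr = (default : Fin 0 → V) := by
        funext j0; exact j0.elim0
      show Formula.Realize φ (Sum.elim (↑) x) ↔ (ℓg x + cg) ∈ T
      rw [hT, Set.mem_setOf_eq]
      have h3 : (ℓg x + cg) ∘ Sum.inl = Sum.elim (↑) x := h1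
      rw [h3, h2]
      exact Iff.rfl
    rw [hXeq]
    exact BoolComb.preimage_affine _ _ hmain
  constructor
  · intro n X hX
    exact part1 n X hX
  · intro hchar n H hH
    haveI : Infinite F := inferInstance
    have hbc := part1 n (H : Set (Fin n → V)) hH
    have hsmul : ∀ (c : F) (x : Fin n → V), x ∈ H → c • x ∈ H := by
      intro c x hx
      set g : F →ₗ[F] (Fin n → V) := LinearMap.toSpanSingleton F _ x with hg
      have hgapp : ∀ d : F, g d = d • x := fun d => rfl
      -- finite or cofinite
      have hfin : ∀ T : Set (Fin n → V), BoolComb (Aff F (Fin n → V)) T →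
          (g ⁻¹' T).Finite ∨ ((g ⁻¹' T)ᶜ).Finite := by
        intro T hT
        induction hT with
        | @basic T h =>
          obtain ⟨U, v, rfl⟩ := h
          rcases Set.eq_empty_or_nonempty (g ⁻¹' {y | y - v ∈ U}) with h0 | ⟨c₀, hc₀⟩
          · left; rw [h0]; exact Set.finite_empty
          · set K : Submodule F F := U.comap g with hK
            by_cases hKbot : K = ⊥
            · left
              have : g ⁻¹' {y | y - v ∈ U} = {c₀} := by
                ext c
                simp only [Set.mem_preimage, Set.mem_setOf_eq, Set.mem_singleton_iff]
                have hc₀' : g c₀ - v ∈ U := hc₀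
                constructor
                · intro hc
                  have hd : g (c - c₀) ∈ U := by
                    rw [map_sub]
                    have := U.sub_mem hc hc₀'
                    simpa [sub_sub_sub_cancel_right] using this
                  have : c - c₀ ∈ K := hd
                  rw [hKbot] at this
                  have hz : c - c₀ = 0 := (Submodule.mem_bot (R := F)).1 this
                  exact sub_eq_zero.1 hz
                · rintro rfl; exact hc₀'
              rw [this]; exact Set.finite_singleton _
            · right
              -- K = ⊤
              have hKtop : K = ⊤ := by
                rcases Submodule.exists_mem_ne_zero_of_ne_bot hKbot with ⟨d, hd, hd0⟩
                rw [Submodule.eq_top_iff']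
                intro e
                have : e = (e * d⁻¹) • d := by
                  rw [smul_eq_mul, mul_assoc, inv_mul_cancel₀ hd0, mul_one]
                rw [this]
                exact K.smul_mem _ hd
              have : g ⁻¹' {y | y - v ∈ U} = Set.univ := by
                rw [Set.eq_univ_iff_forall]
                intro c
                have hc₀' : g c₀ - v ∈ U := hc₀
                have hmem : c - c₀ ∈ K := by rw [hKtop]; trivial
                have : g (c - c₀) ∈ U := hmem
                show g c - v ∈ U
                have he : g c - v = g (c - c₀) + (g c₀ - v) := by
                  rw [map_sub]; abel
                rw [he]
                exact U.add_mem this hc₀'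
              rw [this]
              simp
        | univ => right; simp
        | compl _ ih =>
          rcases ih with h | h
          · right; rwa [Set.preimage_compl, _root_.compl_compl]
          · left; rwa [Set.preimage_compl]
        | inter _ _ ih1 ih2 =>
          rw [Set.preimage_inter]
          rcases ih1 with h1 | h1
          · left; exact h1.inter_of_left _
          · rcases ih2 with h2 | h2
            · left; exact h2.inter_of_right _
            · right
              rw [Set.compl_inter]
              exact h1.union h2
      -- S := preimage of H
      have hS := hfin _ hbc
      have hSsub : ∀ m : ℕ, (m : F) ∈ g ⁻¹' (H : Set (Fin n → V)) := by
        intro m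
        show (m : F) • x ∈ H
        rw [Nat.cast_smul_eq_nsmul]
        exact AddSubgroup.nsmul_mem H hx m
      have hSinf : (g ⁻¹' (H : Set (Fin n → V))).Infinite :=
        Set.infinite_of_injective_forall_mem (f := fun m : ℕ => (m : F))
          Nat.cast_injective hSsub
      have hScof : ((g ⁻¹' (H : Set (Fin n → V)))ᶜ).Finite := by
        rcases hS with h | h
        · exact absurd h hSinf
        · exact h
      by_contra hc
      have hall : ∀ m : ℕ, c + (m : F) ∈ (g ⁻¹' (H : Set (Fin n → V)))ᶜ := by
        intro m
        intro hmem
        apply hc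
        have h1 : (c + (m : F)) • x ∈ H := hmem
        have h2 : (m : F) • x ∈ H := hSsub m
        have : c • x = (c + (m : F)) • x - (m : F) • x := by
          rw [add_smul]; abel
        show c • x ∈ H
        rw [this]
        exact AddSubgroup.sub_mem H h1 h2
      have hinf2 : ((g ⁻¹' (H : Set (Fin n → V)))ᶜ).Infinite := by
        refine Set.infinite_of_injective_forall_mem (f := fun m : ℕ => c + (m : F)) ?_ hall
        intro a b hab
        have h1 : (a : F) = (b : F) := by
          have h2 : c + (a : F) = c + (b : F) := hab
          exact add_left_cancel h2
        exact_mod_cast h1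
      exact hinf2 hScof
    refine ⟨{ toAddSubmonoid := H.toAddSubmonoid,
              smul_mem' := fun c {x} hx => hsmul c x hx }, rfl⟩


end TracePaper
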